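/- Fix an integer q ≥ 2, a real R with 0 < R < 1, and an integer l > 2/(1−R). For each n, let N = C(n+q−1, q−1) be the number of types on (Fin q)^n, let T* ⊆ (Fin q)^n be a type class of maximal cardinality, and let M_n = ⌈2^{q^{R·n·l}}⌉. Then for all sufficiently large n there exist functions Φ_1, …, Φ_{M_n} : (T*)^{l−1} → Fin N such that for all i ≠ j, |{ȳ ∈ (T*)^{l−1} : Φ_i(ȳ) = Φ_j(ȳ)}| ≤ (2/N)·|T*|^{l−1}. (Such a family realizes an (n, l, M_n) deterministic identification-feedback code for the q-ary uniform permutation channel with λ_1 = 0 and λ_2 ≤ 2/N → 0: the encoder sends a fixed vector of type-class T* in the first l−1 blocks and, on feedback ȳ, sends a representative of the Φ_i(ȳ)-th type class in the last block; the maximum pairwise agreement fraction of the Φ's equals λ_2.) -/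

import Mathlib

open Finset

/-- The type (empirical histogram) of a vector `x ∈ (Fin q)^n`. -/
def typeOf (q n : ℕ) (x : Fin n → Fin q) : Fin q → ℕ :=
  fun a => (Finset.univ.filter fun k => x k = a).card

/-- The type class of a type `c : Fin q → ℕ`: all vectors whose coordinate counts
equal `c`. -/
def typeClassOf (q n : ℕ) (c : Fin q → ℕ) : Finset (Fin n → Fin q) :=
  Finset.univ.filter fun x => typeOf q n x = c

set_option maxHeartbeats 1000000
set_option linter.unusedSectionVars false

open Finset

section Abstract
variable {α β : Type*} [Fintype α] [Fintype β] [DecidableEq α] [DecidableEq β]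

/-- number of coordinates where `g` agrees with `f`. -/
def agreeCard (f g : α → β) : ℕ := (univ.filter fun y => g y = f y).card

lemma agreeCard_comm (f g : α → β) : agreeCard f g = agreeCard g f := by
  unfold agreeCard; congr 1; ext y; simp [eq_comm]

lemma agreeCard_self (f : α → β) : agreeCard f f = Fintype.card α := by
  simp [agreeCard]

lemma agreeCard_le (f g : α → β) : agreeCard f g ≤ Fintype.card α :=
  (Finset.card_filter_le _ _).trans (le_of_eq (Finset.card_univ))

lemma count_agree_eq_le (f : α → β) (a : ℕ) :
    (univ.filter fun g : α → β => agreeCard f g = a).card ≤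
      (Fintype.card α).choose a * (Fintype.card β - 1) ^ (Fintype.card α - a) := by
  classical
  set D := Fintype.card α
  set N := Fintype.card β
  have hsub : (univ.filter fun g : α → β => agreeCard f g = a) ⊆
      (Finset.univ.powersetCard a).biUnion
        (fun S => Fintype.piFinset fun y => if y ∈ S then {f y} else {f y}ᶜ) := by
    intro g hg
    simp only [mem_filter, mem_univ, true_and] at hg
    refine Finset.mem_biUnion.2 ⟨univ.filter fun y => g y = f y, ?_, ?_⟩
    · exact Finset.mem_powersetCard.2 ⟨Finset.subset_univ _, hg⟩
    · refine Fintype.mem_piFinset.2 fun y => ?_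
      by_cases h : g y = f y <;> simp [h]
  refine (Finset.card_le_card hsub).trans ((Finset.card_biUnion_le).trans ?_)
  have hcard : ∀ S ∈ Finset.univ.powersetCard a,
      (Fintype.piFinset fun y => if y ∈ S then ({f y} : Finset β) else {f y}ᶜ).card
        = (N - 1) ^ (D - a) := by
    intro S hS
    obtain ⟨-, hSa⟩ := Finset.mem_powersetCard.1 hS
    rw [Fintype.card_piFinset]
    have : ∀ y, (if y ∈ S then ({f y} : Finset β) else {f y}ᶜ).card
        = if y ∈ S then 1 else N - 1 := by
      intro y; by_cases h : y ∈ S <;> simp [h, Finset.card_compl] <;> rfl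
    rw [Finset.prod_congr rfl fun y _ => this y]
    rw [Finset.prod_ite, Finset.prod_const, Finset.prod_const, one_pow, one_mul]
    congr 1
    rw [Finset.filter_not, Finset.card_sdiff_of_subset (Finset.filter_subset _ _),
      Finset.filter_mem_eq_inter, Finset.univ_inter, Finset.card_univ, hSa]
  rw [Finset.sum_congr rfl hcard, Finset.sum_const, Finset.card_powersetCard,
    Finset.card_univ, smul_eq_mul]

end Abstract

-- term ratio step
lemma term_step (D N : ℕ) (s : ℕ) (hN : 2 ≤ N)
    (h : (D : ℝ) ≤ 3 / 4 * s * ((N : ℝ) - 1)) (a : ℕ) (ha : s ≤ a) :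
    (D.choose (a + 1) : ℝ) * ((N : ℝ) - 1) ^ (D - (a + 1)) ≤
      3 / 4 * ((D.choose a : ℝ) * ((N : ℝ) - 1) ^ (D - a)) := by
  have hN1 : (1 : ℝ) ≤ (N : ℝ) := by exact_mod_cast (by omega : 1 ≤ N)
  have hNpos : (0 : ℝ) ≤ (N : ℝ) - 1 := by linarith
  by_cases hD : D ≤ a
  · have : D.choose (a + 1) = 0 := Nat.choose_eq_zero_of_lt (by omega)
    rw [this, Nat.cast_zero, zero_mul]
    have h1 : (0:ℝ) ≤ ((N:ℝ)-1)^(D-a) := pow_nonneg hNpos _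
    have h2 : (0:ℝ) ≤ (D.choose a : ℝ) := Nat.cast_nonneg _
    nlinarith
  · push_neg at hD
    have hexp : D - a = (D - (a + 1)) + 1 := by omega
    have hkey : (D.choose (a + 1) : ℝ) * (a + 1) = (D.choose a : ℝ) * (D - a : ℕ) := by
      exact_mod_cast congrArg (Nat.cast (R := ℝ)) (Nat.choose_succ_right_eq D a)
    have hbound : ((D - a : ℕ) : ℝ) ≤ 3 / 4 * (a + 1) * ((N : ℝ) - 1) := by
      have h1 : ((D - a : ℕ) : ℝ) ≤ (D : ℝ) := by
        have : D - a ≤ D := Nat.sub_le _ _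
        exact_mod_cast this
      have h2 : (s : ℝ) ≤ (a + 1 : ℝ) := by exact_mod_cast (by omega : s ≤ a + 1)
      nlinarith
    have hpow : ((N : ℝ) - 1) ^ (D - a) = ((N : ℝ) - 1) ^ (D - (a + 1)) * ((N : ℝ) - 1) := by
      rw [hexp, pow_succ]
    have hpos : (0 : ℝ) < (a : ℝ) + 1 := by positivity
    rw [hpow]
    have hchoose : (D.choose (a + 1) : ℝ) = (D.choose a : ℝ) * (D - a : ℕ) / (a + 1) := by
      field_simp at hkey ⊢; linarith [hkey]
    rw [hchoose]
    rw [div_mul_eq_mul_div, div_le_iff₀ hpos]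
    have hp : (0 : ℝ) ≤ ((N : ℝ) - 1) ^ (D - (a + 1)) := by positivity
    have hc : (0 : ℝ) ≤ (D.choose a : ℝ) := by positivity
    nlinarith [mul_le_mul_of_nonneg_left hbound (mul_nonneg hc hp)]

lemma term_geom (D N : ℕ) (s : ℕ) (hN : 2 ≤ N)
    (h : (D : ℝ) ≤ 3 / 4 * s * ((N : ℝ) - 1)) (k : ℕ) :
    (D.choose (s + k) : ℝ) * ((N : ℝ) - 1) ^ (D - (s + k)) ≤
      (3 / 4) ^ k * ((D.choose s : ℝ) * ((N : ℝ) - 1) ^ (D - s)) := by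
  induction k with
  | zero => simp
  | succ k ih =>
    have := term_step D N s hN h (s + k) (Nat.le_add_right _ _)
    calc (D.choose (s + (k+1)) : ℝ) * ((N : ℝ) - 1) ^ (D - (s + (k+1)))
        = (D.choose ((s + k) + 1) : ℝ) * ((N : ℝ) - 1) ^ (D - ((s + k) + 1)) := by ring_nf
      _ ≤ 3 / 4 * ((D.choose (s+k) : ℝ) * ((N : ℝ) - 1) ^ (D - (s+k))) := this
      _ ≤ 3 / 4 * ((3 / 4) ^ k * ((D.choose s : ℝ) * ((N : ℝ) - 1) ^ (D - s))) := by
          apply mul_le_mul_of_nonneg_left ih; norm_num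
      _ = (3 / 4) ^ (k+1) * ((D.choose s : ℝ) * ((N : ℝ) - 1) ^ (D - s)) := by ring

lemma tail_le (D N s : ℕ) (hN : 2 ≤ N)
    (h : (D : ℝ) ≤ 3 / 4 * s * ((N : ℝ) - 1)) :
    ∑ a ∈ Icc s D, (D.choose a : ℝ) * ((N : ℝ) - 1) ^ (D - a) ≤
      4 * ((D.choose s : ℝ) * ((N : ℝ) - 1) ^ (D - s)) := by
  have hterm : (0:ℝ) ≤ (D.choose s : ℝ) * ((N : ℝ) - 1) ^ (D - s) := by
    have : (1:ℝ) ≤ (N:ℝ) := by exact_mod_cast (by omega : 1 ≤ N)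
    have : (0:ℝ) ≤ (N:ℝ) - 1 := by linarith
    positivity
  by_cases hsD : s ≤ D
  · rw [← Finset.Ico_add_one_right_eq_Icc, Finset.sum_Ico_eq_sum_range]
    calc ∑ k ∈ Finset.range (D + 1 - s), (D.choose (s + k) : ℝ) * ((N : ℝ) - 1) ^ (D - (s + k))
        ≤ ∑ k ∈ Finset.range (D + 1 - s),
            (3/4 : ℝ) ^ k * ((D.choose s : ℝ) * ((N : ℝ) - 1) ^ (D - s)) := by
          exact Finset.sum_le_sum fun k _ => term_geom D N s hN h k
      _ = (∑ k ∈ Finset.range (D + 1 - s), (3/4 : ℝ) ^ k) *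
            ((D.choose s : ℝ) * ((N : ℝ) - 1) ^ (D - s)) := by rw [← Finset.sum_mul]
      _ ≤ 4 * ((D.choose s : ℝ) * ((N : ℝ) - 1) ^ (D - s)) := by
          apply mul_le_mul_of_nonneg_right _ hterm
          have : ∑ k ∈ Finset.range (D + 1 - s), (3/4 : ℝ) ^ k
              = (1 - (3/4:ℝ) ^ (D + 1 - s)) / (1 - 3/4) := by
            rw [geom_sum_eq (by norm_num)]; ring_nf
          rw [this]
          have : (0:ℝ) ≤ (3/4:ℝ) ^ (D + 1 - s) := by positivity
          rw [div_le_iff₀ (by norm_num)]; linarith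
  · rw [Finset.Icc_eq_empty (by omega)]
    simp; positivity

section Abstract2
variable {α β : Type*} [Fintype α] [Fintype β] [DecidableEq α] [DecidableEq β]

lemma ball_card_le (f : α → β) (s : ℕ) (hN : 2 ≤ Fintype.card β)
    (h : (Fintype.card α : ℝ) ≤ 3 / 4 * s * ((Fintype.card β : ℝ) - 1)) :
    ((univ.filter fun g : α → β => s ≤ agreeCard f g).card : ℝ) ≤
      4 * (((Fintype.card α).choose s : ℝ) *
        ((Fintype.card β : ℝ) - 1) ^ (Fintype.card α - s)) := by
  classical
  set D := Fintype.card α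
  set N := Fintype.card β
  have hsub : (univ.filter fun g : α → β => s ≤ agreeCard f g) ⊆
      (Icc s D).biUnion fun a => univ.filter fun g : α → β => agreeCard f g = a := by
    intro g hg
    simp only [mem_filter, mem_univ, true_and] at hg ⊢
    exact Finset.mem_biUnion.2 ⟨agreeCard f g, Finset.mem_Icc.2 ⟨hg, agreeCard_le f g⟩,
      by simp⟩
  have h1 : ((univ.filter fun g : α → β => s ≤ agreeCard f g).card : ℝ) ≤
      ∑ a ∈ Icc s D, ((univ.filter fun g : α → β => agreeCard f g = a).card : ℝ) := by
    exact_mod_cast (Finset.card_le_card hsub).trans Finset.card_biUnion_le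
  refine h1.trans ((Finset.sum_le_sum fun a _ => ?_).trans (tail_le D N s hN h))
  have := count_agree_eq_le f a
  have hcast : (((D.choose a) * (N - 1) ^ (D - a) : ℕ) : ℝ)
      = (D.choose a : ℝ) * ((N:ℝ) - 1) ^ (D - a) := by
    push_cast [Nat.cast_sub (by omega : 1 ≤ N)]; ring
  calc ((univ.filter fun g : α → β => agreeCard f g = a).card : ℝ)
      ≤ (((D.choose a) * (N - 1) ^ (D - a) : ℕ) : ℝ) := by exact_mod_cast this
    _ = _ := hcast

lemma exists_good_family [Nonempty β] (s M : ℕ) (hsD : s ≤ Fintype.card α) (B : ℝ)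
    (hB : ∀ f : α → β, ((univ.filter fun g : α → β => s ≤ agreeCard f g).card : ℝ) ≤ B)
    (hM : (M : ℝ) * B < (Fintype.card (α → β) : ℝ)) :
    ∃ Φ : Fin M → (α → β), ∀ i j, i ≠ j → agreeCard (Φ i) (Φ j) < s := by
  classical
  have hB0 : 0 ≤ B := le_trans (by positivity) (hB (Classical.arbitrary (α → β)))
  have key : ∀ m, m ≤ M → ∃ T : Finset (α → β), T.card = m ∧
      ∀ f ∈ T, ∀ g ∈ T, f ≠ g → agreeCard f g < s := by
    intro m
    induction m with
    | zero => exact fun _ => ⟨∅, by simp⟩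
    | succ m ih =>
      intro hm
      obtain ⟨T, hTcard, hTpair⟩ := ih (by omega)
      set U : Finset (α → β) :=
        T.biUnion (fun f => univ.filter fun g => s ≤ agreeCard f g) with hU
      have hUcard : (U.card : ℝ) < (Fintype.card (α → β) : ℝ) := by
        have h1 : (U.card : ℝ) ≤ ∑ f ∈ T, ((univ.filter fun g : α → β =>
            s ≤ agreeCard f g).card : ℝ) := by
          exact_mod_cast Finset.card_biUnion_le
        have h2 : ∑ f ∈ T, ((univ.filter fun g : α → β =>
            s ≤ agreeCard f g).card : ℝ) ≤ (m : ℝ) * B := by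
          rw [← hTcard] at *
          calc _ ≤ ∑ _f ∈ T, B := Finset.sum_le_sum fun f _ => hB f
            _ = (T.card : ℝ) * B := by rw [Finset.sum_const, nsmul_eq_mul]
        have h3 : (m : ℝ) * B ≤ (M : ℝ) * B := by
          apply mul_le_mul_of_nonneg_right _ hB0
          exact_mod_cast (by omega : m ≤ M)
        linarith
      have hne : ¬ (univ : Finset (α → β)) ⊆ U := by
        intro hsubs
        have := Finset.card_le_card hsubs
        rw [Finset.card_univ] at this
        exact absurd (Nat.cast_le.2 this) (not_le.2 hUcard)
      obtain ⟨g, -, hgU⟩ := Finset.not_subset.1 hne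
      have hgood : ∀ f ∈ T, agreeCard f g < s := by
        intro f hf
        by_contra hcon
        exact hgU (Finset.mem_biUnion.2 ⟨f, hf, by
          simp only [mem_filter, mem_univ, true_and]; omega⟩)
      have hgT : g ∉ T := by
        intro hgT
        have := hgood g hgT
        rw [agreeCard_self] at this
        omega
      refine ⟨insert g T, by rw [Finset.card_insert_of_notMem hgT, hTcard], ?_⟩
      intro f1 hf1 f2 hf2 hne12
      rcases Finset.mem_insert.1 hf1 with h1 | h1
      · rcases Finset.mem_insert.1 hf2 with h2 | h2
        · exact absurd (h1.trans h2.symm) hne12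
        · subst h1; rw [agreeCard_comm]; exact hgood f2 h2
      · rcases Finset.mem_insert.1 hf2 with h2 | h2
        · subst h2; exact hgood f1 h1
        · exact hTpair f1 h1 f2 h2 hne12
  obtain ⟨T, hTcard, hTpair⟩ := key M le_rfl
  refine ⟨fun i => (T.equivFin.symm (Fin.cast hTcard.symm i) : α → β), ?_⟩
  intro i j hij
  have hne : ((T.equivFin.symm (Fin.cast hTcard.symm i)) : α → β)
      ≠ ((T.equivFin.symm (Fin.cast hTcard.symm j)) : α → β) := by
    intro hEq
    apply hij
    have := Subtype.ext hEq
    have := T.equivFin.symm.injective this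
    simpa [Fin.ext_iff] using this
  exact hTpair _ (Finset.coe_mem _) _ (Finset.coe_mem _) hne

end Abstract2
set_option maxHeartbeats 1000000
open Finset

lemma scalar_ineq (E s N D : ℝ) (hE : 0 ≤ E) (hN : 20 ≤ N)
    (hD : (E + 4) * (4 * N) ≤ D) (hs1 : 2 * D ≤ s * N) (hs2 : s * N ≤ 2 * D + N) :
    (E + 3 + s * (1 - Real.log 2)) * N ≤ D - s := by
  have hlog : 0.6931471803 < Real.log 2 := Real.log_two_gt_d9
  have hlog2 : Real.log 2 < 0.6931471808 := Real.log_two_lt_d9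
  have hD0 : 0 < D := by nlinarith
  have hs0 : 0 < s := by nlinarith
  have hsD : s * 20 ≤ 2 * D + N := by nlinarith
  nlinarith [mul_le_mul_of_nonneg_right hs2 (by linarith : (0:ℝ) ≤ 1 - Real.log 2),
    mul_pos hs0 (by linarith : (0:ℝ) < N)]

lemma pow_div_factorial_le_exp (x : ℝ) (hx : 0 ≤ x) (n : ℕ) :
    x ^ n / n.factorial ≤ Real.exp x := by
  have h := Real.sum_le_exp_of_nonneg hx (n + 1)
  refine le_trans ?_ h
  have : ∀ i ∈ Finset.range (n + 1), (0:ℝ) ≤ x ^ i / i.factorial := by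
    intro i _; positivity
  calc x ^ n / n.factorial ≤ ∑ i ∈ Finset.range (n + 1), x ^ i / i.factorial :=
        Finset.single_le_sum this (Finset.self_mem_range_succ n)
    _ = _ := rfl

lemma key_ineq (N D M s : ℕ) (E : ℝ) (hE : 0 ≤ E) (hN : 20 ≤ N)
    (hD : (E + 4) * (4 * (N : ℝ)) ≤ (D : ℝ))
    (hs1 : 2 * D < N * s) (hs2 : N * s ≤ 2 * D + N)
    (hM : (M : ℝ) ≤ Real.exp (E + 1)) :
    (M : ℝ) * (4 * ((D.choose s : ℝ) * ((N : ℝ) - 1) ^ (D - s))) < (N : ℝ) ^ D := by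
  have hNR : (20 : ℝ) ≤ (N : ℝ) := by exact_mod_cast hN
  have hNpos : (0:ℝ) < N := by linarith
  have hsR1 : 2 * (D:ℝ) < (s:ℝ) * N := by
    have : ((2 * D : ℕ) : ℝ) < ((N * s : ℕ) : ℝ) := by exact_mod_cast hs1
    push_cast at this; linarith
  have hsR2 : (s:ℝ) * N ≤ 2 * (D:ℝ) + N := by
    have : ((N * s : ℕ) : ℝ) ≤ ((2 * D + N : ℕ) : ℝ) := by exact_mod_cast hs2
    push_cast at this; linarith
  have hDlb : (320:ℝ) ≤ (D:ℝ) := by nlinarith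
  have hs0R : (0:ℝ) < (s:ℝ) := by nlinarith
  have hsD : s ≤ D := by
    have h20s : 20 * (s:ℝ) ≤ 2*(D:ℝ) + N := by nlinarith
    have hND : (N:ℝ) ≤ (D:ℝ)/16 := by nlinarith
    have : (s:ℝ) ≤ (D:ℝ) := by nlinarith
    exact_mod_cast this
  -- choose bound
  have hchoose : (D.choose s : ℝ) ≤ ((N:ℝ)/2) ^ s * Real.exp s := by
    have h1 : (D.choose s : ℝ) ≤ ((D:ℝ)) ^ s / (s.factorial) := by
      have := Nat.choose_le_pow_div (α := ℝ) s D
      simpa using this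
    have h2 : (s:ℝ) ^ s / s.factorial ≤ Real.exp s := pow_div_factorial_le_exp _ (by positivity) s
    have hfac : (0:ℝ) < (s.factorial : ℝ) := by exact_mod_cast s.factorial_pos
    have h3 : ((D:ℝ)) ^ s / s.factorial ≤ ((N:ℝ)/2) ^ s * ((s:ℝ) ^ s / s.factorial) := by
      rw [mul_div_assoc', ← mul_pow]
      have hpow : ((D:ℝ)) ^ s ≤ ((N:ℝ)/2 * (s:ℝ)) ^ s := by
        apply pow_le_pow_left₀ (by positivity)
        nlinarith
      exact div_le_div_of_nonneg_right hpow hfac.le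
    refine h1.trans (h3.trans ?_)
    exact mul_le_mul_of_nonneg_left h2 (by positivity)
  -- N ≥ exp(1/N) (N-1)
  have hexpN : Real.exp (1/(N:ℝ)) * ((N:ℝ) - 1) ≤ (N:ℝ) := by
    have h := Real.add_one_le_exp (-(1/(N:ℝ)))
    have hy : (0:ℝ) < Real.exp (-(1/(N:ℝ))) := Real.exp_pos _
    have hinv : Real.exp (1/(N:ℝ)) = 1 / Real.exp (-(1/(N:ℝ))) := by
      rw [Real.exp_neg]; field_simp
    rw [hinv, div_mul_eq_mul_div, div_le_iff₀ hy, one_mul]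
    have h1 : (1:ℝ) - 1/N ≤ Real.exp (-(1/(N:ℝ))) := by linarith
    calc (N:ℝ) - 1 = (N:ℝ) * (1 - 1/N) := by field_simp
      _ ≤ (N:ℝ) * Real.exp (-(1/(N:ℝ))) := mul_le_mul_of_nonneg_left h1 (by positivity)
  set C := (D.choose s : ℝ) with hCdef
  set P := ((N:ℝ)-1) ^ (D-s) with hPdef
  have hP0 : (0:ℝ) < P := by
    have hgt : (0:ℝ) < (N:ℝ) - 1 := by linarith
    exact pow_pos hgt _
  have hM0 : (0:ℝ) ≤ (M:ℝ) := Nat.cast_nonneg _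
  have hDmsc : ((D - s : ℕ):ℝ) = (D:ℝ) - s := by
    rw [Nat.cast_sub hsD]
  have hsplit : (N:ℝ)^D = (N:ℝ)^s * (N:ℝ)^(D-s) := by
    rw [← pow_add]; congr 1; omega
  have hexp2 : Real.exp (((D:ℝ)-s)/N) * P ≤ (N:ℝ)^(D-s) := by
    have hb := pow_le_pow_left₀ (mul_nonneg (Real.exp_pos _).le (by linarith)) hexpN (D - s)
    rw [mul_pow, ← Real.exp_nat_mul] at hb
    have heq : ((D - s : ℕ):ℝ) * (1/(N:ℝ)) = ((D:ℝ)-s)/N := by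
      rw [hDmsc]; ring
    rw [heq] at hb
    exact hb
  have hscal : (E + 3 + (s:ℝ) * (1 - Real.log 2)) ≤ ((D:ℝ) - s) / N := by
    rw [le_div_iff₀ hNpos]
    exact scalar_ineq E s N D hE hNR hD (le_of_lt hsR1) hsR2
  have h2s : (2:ℝ) ^ s = Real.exp ((s:ℝ) * Real.log 2) := by
    rw [Real.exp_nat_mul, Real.exp_log (by norm_num : (0:ℝ) < 2)]
  have hkey1 : 4 * (M:ℝ) * Real.exp s < Real.exp (E + 3 + s) := by
    have h4 : (4:ℝ) < Real.exp 2 := by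
      have h := Real.exp_one_gt_d9
      have he2 : Real.exp 2 = Real.exp 1 * Real.exp 1 := by
        rw [← Real.exp_add]; norm_num
      nlinarith
    have hb1 : 4 * (M:ℝ) * Real.exp s ≤ 4 * Real.exp (E+1) * Real.exp s := by
      have := Real.exp_pos (s:ℝ); nlinarith
    have hxy : (0:ℝ) < Real.exp (E+1) * Real.exp (s:ℝ) := mul_pos (Real.exp_pos _) (Real.exp_pos _)
    have hb2' := mul_lt_mul_of_pos_right h4 hxy
    have hb2 : 4 * Real.exp (E+1) * Real.exp s < Real.exp 2 * (Real.exp (E+1) * Real.exp s) := by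
      nlinarith [hb2']
    have hb3 : Real.exp 2 * (Real.exp (E+1) * Real.exp s) = Real.exp (E+3+s) := by
      rw [← Real.exp_add, ← Real.exp_add]; ring_nf
    linarith
  have hfrac : 4 * (M:ℝ) * Real.exp s < 2 ^ s * Real.exp (((D:ℝ)-s)/N) := by
    have hsplit2 : Real.exp (E+3+(s:ℝ)) = 2^s * Real.exp (E + 3 + s * (1 - Real.log 2)) := by
      rw [h2s, ← Real.exp_add]; ring_nf
    have hmono : Real.exp (E + 3 + (s:ℝ)*(1 - Real.log 2)) ≤ Real.exp (((D:ℝ)-s)/N) :=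
      Real.exp_le_exp.2 hscal
    have h2s0 : (0:ℝ) < (2:ℝ)^s := by positivity
    calc 4 * (M:ℝ) * Real.exp s < Real.exp (E+3+(s:ℝ)) := hkey1
      _ = 2^s * Real.exp (E + 3 + (s:ℝ)*(1-Real.log 2)) := hsplit2
      _ ≤ 2^s * Real.exp (((D:ℝ)-s)/N) := mul_le_mul_of_nonneg_left hmono (le_of_lt h2s0)
  have hCP : (M:ℝ) * (4 * (C * P)) ≤ (4 * M * Real.exp s) * (((N:ℝ)/2)^s * P) := by
    have e1 : (M:ℝ) * (4 * (C*P)) = (4*(M:ℝ)) * (C*P) := by ring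
    have e2 : (4*(M:ℝ)*Real.exp s) * (((N:ℝ)/2)^s * P)
        = (4*(M:ℝ)) * ((((N:ℝ)/2)^s * Real.exp s) * P) := by ring
    rw [e1, e2]
    apply mul_le_mul_of_nonneg_left _ (by positivity)
    exact mul_le_mul_of_nonneg_right hchoose (le_of_lt hP0)
  have hstep : (4 * (M:ℝ) * Real.exp s) * (((N:ℝ)/2)^s * P)
      < (N:ℝ)^s * (Real.exp (((D:ℝ)-s)/N) * P) := by
    have h2s0 : (0:ℝ) < (2:ℝ)^s := by positivity
    have hq : (0:ℝ) < (N:ℝ)^s * P / 2^s := by positivity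
    have := mul_lt_mul_of_pos_right hfrac hq
    calc (4 * (M:ℝ) * Real.exp s) * (((N:ℝ)/2)^s * P)
        = (4 * (M:ℝ) * Real.exp s) * ((N:ℝ)^s * P / 2^s) := by
          rw [div_pow]; ring
      _ < (2^s * Real.exp (((D:ℝ)-s)/N)) * ((N:ℝ)^s * P / 2^s) := this
      _ = (N:ℝ)^s * (Real.exp (((D:ℝ)-s)/N) * P) := by field_simp
  have hlast : (N:ℝ)^s * (Real.exp (((D:ℝ)-s)/N) * P) ≤ (N:ℝ)^D := by
    rw [hsplit]
    exact mul_le_mul_of_nonneg_left hexp2 (by positivity)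
  calc (M:ℝ) * (4 * (C * P)) ≤ _ := hCP
    _ < _ := hstep
    _ ≤ _ := hlast

lemma sum_typeOf (q n : ℕ) (x : Fin n → Fin q) : ∑ a, typeOf q n x a = n := by
  unfold typeOf
  have := Finset.card_eq_sum_card_fiberwise
    (s := (univ : Finset (Fin n))) (t := (univ : Finset (Fin q))) (f := x)
    (fun k _ => Finset.mem_univ (x k))
  simpa using this.symm

lemma card_types_le (q n : ℕ) (hq : 1 ≤ q) :
    ((univ : Finset (Fin n → Fin q)).image (typeOf q n)).card ≤
      (n + q - 1).choose (q - 1) := by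
  classical
  -- inject into Sym (Fin q) n
  have hinj : ∀ c ∈ (univ : Finset (Fin n → Fin q)).image (typeOf q n),
      ∑ a, c a = n := by
    intro c hc
    obtain ⟨x, -, rfl⟩ := Finset.mem_image.1 hc
    exact sum_typeOf q n x
  have key : ((univ : Finset (Fin n → Fin q)).image (typeOf q n)).card ≤
      Fintype.card (Sym (Fin q) n) := by
    rw [← Fintype.card_coe (((univ : Finset (Fin n → Fin q)).image (typeOf q n)))]
    let emb : {c // c ∈ (univ : Finset (Fin n → Fin q)).image (typeOf q n)} →
        Sym (Fin q) n := fun c =>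
      (⟨∑ a, Multiset.replicate (c.1 a) a, by
          rw [Multiset.card_sum]
          simp only [Multiset.card_replicate]
          exact hinj c.1 c.2⟩ : Sym (Fin q) n)
    have hemb : Function.Injective emb := by
      intro c d hcd
      have hval : (∑ a, Multiset.replicate (c.1 a) a)
          = (∑ a, Multiset.replicate (d.1 a) a) := congrArg Subtype.val hcd
      apply Subtype.ext
      funext a
      have hc := congrArg (Multiset.count a) hval
      simpa [Multiset.count_sum', Multiset.count_replicate, Finset.sum_ite_eq'] using hc
    exact Fintype.card_le_of_injective emb hemb
  rw [Sym.card_sym_eq_choose, Fintype.card_fin] at key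
  have h1 : q + n - 1 = n + q - 1 := by omega
  have h2 : (n + q - 1).choose n = (n + q - 1).choose (q - 1) := by
    have h3 : n ≤ n + q - 1 := by omega
    have := Nat.choose_symm h3
    have h4 : n + q - 1 - n = q - 1 := by omega
    rw [h4] at this
    exact this.symm
  rw [h1, h2] at key
  exact key

lemma pow_le_card_mul (q n : ℕ) (hq : 1 ≤ q) (cstar : Fin q → ℕ)
    (hmaximal : ∀ c : Fin q → ℕ, ∑ a, c a = n →
      (typeClassOf q n c).card ≤ (typeClassOf q n cstar).card) :
    q ^ n ≤ (n + q - 1).choose (q - 1) * (typeClassOf q n cstar).card := by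
  classical
  set I := (univ : Finset (Fin n → Fin q)).image (typeOf q n) with hI
  have hcover : (univ : Finset (Fin n → Fin q)) ⊆
      I.biUnion (fun c => typeClassOf q n c) := by
    intro x _
    exact Finset.mem_biUnion.2 ⟨typeOf q n x, Finset.mem_image_of_mem _ (mem_univ x),
      by simp [typeClassOf]⟩
  have h1 : q ^ n ≤ (I.biUnion (fun c => typeClassOf q n c)).card := by
    have := Finset.card_le_card hcover
    simpa [Finset.card_univ] using this
  have h2 : (I.biUnion (fun c => typeClassOf q n c)).card ≤
      ∑ c ∈ I, (typeClassOf q n c).card := Finset.card_biUnion_le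
  have h3 : ∑ c ∈ I, (typeClassOf q n c).card ≤ I.card * (typeClassOf q n cstar).card := by
    rw [← smul_eq_mul, ← Finset.sum_const]
    apply Finset.sum_le_sum
    intro c hc
    obtain ⟨x, -, rfl⟩ := Finset.mem_image.1 hc
    exact hmaximal _ (sum_typeOf q n x)
  have h4 : I.card * (typeClassOf q n cstar).card ≤
      (n + q - 1).choose (q - 1) * (typeClassOf q n cstar).card :=
    Nat.mul_le_mul_right _ (card_types_le q n hq)
  omega

lemma choose_lower (n q : ℕ) (hq : 2 ≤ q) : n + 1 ≤ (n + q - 1).choose (q - 1) := by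
  have key : ∀ j, n + 1 ≤ (n + j + 1).choose (j + 1) := by
    intro j
    induction j with
    | zero => simp
    | succ j ih =>
      have := Nat.choose_succ_succ (n + j + 1) (j + 1)
      calc n + 1 ≤ (n + j + 1).choose (j + 1) := ih
        _ ≤ (n + j + 1).choose (j + 1) + (n + j + 1).choose (j + 2) := Nat.le_add_right _ _
        _ = (n + j + 2).choose (j + 2) := (Nat.choose_succ_succ _ _).symm
  have := key (q - 2)
  have h1 : n + (q - 2) + 1 = n + q - 1 := by omega
  have h2 : q - 2 + 1 = q - 1 := by omega
  rwa [h1, h2] at this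

lemma choose_upper (n q : ℕ) (hq : 1 ≤ q) : (n + q - 1).choose (q - 1) ≤ (n + q) ^ q := by
  calc (n + q - 1).choose (q - 1) ≤ (n + q - 1) ^ (q - 1) := Nat.choose_le_pow _ _
    _ ≤ (n + q) ^ (q - 1) := Nat.pow_le_pow_left (by omega) _
    _ ≤ (n + q) ^ q := Nat.pow_le_pow_right (by omega) (by omega)

lemma eventually_poly (q k : ℕ) (hq : 2 ≤ q) :
    ∀ᶠ n : ℕ in Filter.atTop, (8 : ℝ) * ((n : ℝ) + q) ^ k ≤ (q : ℝ) ^ n := by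
  have hq1 : (1:ℝ) < (q:ℝ) := by exact_mod_cast (by omega : 1 < q)
  have hlo := isLittleO_pow_const_const_pow_of_one_lt (R := ℝ) k hq1
  have hc : (0:ℝ) < 1 / (8 * 2 ^ k) := by positivity
  have hev := hlo.def hc
  rw [Filter.eventually_atTop] at hev ⊢
  obtain ⟨m, hm⟩ := hev
  refine ⟨max m q, fun n hn => ?_⟩
  have hnm : m ≤ n := le_trans (le_max_left _ _) hn
  have hnq : q ≤ n := le_trans (le_max_right _ _) hn
  have h := hm n hnm
  rw [Real.norm_eq_abs, Real.norm_eq_abs, abs_of_nonneg (by positivity),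
    abs_of_nonneg (by positivity)] at h
  have h1 : ((n:ℝ) + q) ^ k ≤ (2 * n : ℝ) ^ k := by
    apply pow_le_pow_left₀ (by positivity)
    have : (q:ℝ) ≤ (n:ℝ) := by exact_mod_cast hnq
    linarith
  have h2 : ((2:ℝ) * n) ^ k = 2 ^ k * (n:ℝ) ^ k := by rw [mul_pow]
  calc (8:ℝ) * ((n:ℝ) + q) ^ k ≤ 8 * (2 ^ k * (n:ℝ) ^ k) := by
        rw [← h2]; exact mul_le_mul_of_nonneg_left h1 (by norm_num)
    _ = 8 * 2 ^ k * ((n:ℝ) ^ k) := by ring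
    _ ≤ 8 * 2 ^ k * (1 / (8 * 2 ^ k) * (q:ℝ) ^ n) := by
        apply mul_le_mul_of_nonneg_left h (by positivity)
    _ = (q:ℝ) ^ n := by field_simp


/-- Feedback achievability: fix `q ≥ 2`, `0 < R < 1` and an integer `l > 2/(1-R)`.
For each `n`, let `N = C(n+q-1, q-1)`, let `T* = typeClassOf q n (cstar n)` be a type
class of maximal cardinality, and let `M_n = ⌈2^(q^(R·n·l))⌉`.  Then for all sufficiently
large `n` there exist `Φ_1, …, Φ_{M_n} : (T*)^(l-1) → Fin N` whose pairwise agreement sets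
have size at most `(2/N)·|T*|^(l-1)`. -/

theorem feedbackAchievability (q : ℕ) (hq : 2 ≤ q)
    (R : ℝ) (hR0 : 0 < R) (hR1 : R < 1)
    (l : ℕ) (hl : 2 / (1 - R) < (l : ℝ))
    (cstar : (n : ℕ) → Fin q → ℕ)
    (hsum : ∀ n, ∑ a, cstar n a = n)
    (hmaximal : ∀ n, ∀ c : Fin q → ℕ, ∑ a, c a = n →
      (typeClassOf q n c).card ≤ (typeClassOf q n (cstar n)).card) :
    ∀ᶠ n : ℕ in Filter.atTop,
      ∃ Φ : Fin ⌈(2 : ℝ) ^ ((q : ℝ) ^ (R * (n : ℝ) * (l : ℝ)))⌉₊ →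
          ((Fin (l - 1) → {x // x ∈ typeClassOf q n (cstar n)}) →
            Fin ((n + q - 1).choose (q - 1))),
        ∀ i j, i ≠ j →
          (((Finset.univ.filter fun yb => Φ i yb = Φ j yb).card : ℝ) ≤
            2 / ((n + q - 1).choose (q - 1) : ℝ) *
              ((typeClassOf q n (cstar n)).card : ℝ) ^ (l - 1)) := by
  classical
  have h1R : 0 < 1 - R := by linarith
  have hl2 : (2:ℝ) < (l:ℝ) := by
    have h2 : (2:ℝ) ≤ 2 / (1 - R) := by
      rw [le_div_iff₀ h1R]; nlinarith
    linarith
  have hl3 : 3 ≤ l := by exact_mod_cast (by norm_cast at hl2 ⊢ : (2:ℕ) < l)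
  have hRl : R * l ≤ (l:ℝ) - 2 := by
    rw [div_lt_iff₀ h1R] at hl
    nlinarith
  filter_upwards [Filter.eventually_ge_atTop 19, eventually_poly q (q * l) hq]
    with n hn19 hpoly
  -- abbreviations
  set N := (n + q - 1).choose (q - 1) with hNdef
  set Tst := typeClassOf q n (cstar n) with hTdef
  set T := Tst.card with hTcard
  set D := T ^ (l - 1) with hDdef
  set E := (q : ℝ) ^ (R * (n : ℝ) * (l : ℝ)) with hEdef
  set M := ⌈(2 : ℝ) ^ E⌉₊ with hMdef
  set s := (2 * D) / N + 1 with hsdef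
  have hN20 : 20 ≤ N := by
    have := choose_lower n q hq
    omega
  have hNpos : 0 < N := by omega
  have hNR : (20:ℝ) ≤ (N:ℝ) := by exact_mod_cast hN20
  have hE0 : 0 ≤ E := Real.rpow_nonneg (by positivity) _
  -- q^n ≤ N * T
  have hNT : q ^ n ≤ N * T := pow_le_card_mul q n (by omega) (cstar n) (hmaximal n)
  have hNTR : ((q:ℝ)) ^ n ≤ (N:ℝ) * T := by exact_mod_cast hNT
  have hTpos : 0 < T := by
    rcases Nat.eq_zero_or_pos T with h | h
    · rw [h, Nat.mul_zero] at hNT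
      have := Nat.pow_pos (show 0 < q by omega) (n := n)
      omega
    · exact h
  -- the key size inequality
  have hP4 : (4:ℝ) ≤ (q:ℝ) ^ n := by
    calc (4:ℝ) = 2 ^ 2 := by norm_num
      _ ≤ (2:ℝ) ^ n := pow_le_pow_right₀ (by norm_num) (by omega)
      _ ≤ (q:ℝ) ^ n := pow_le_pow_left₀ (by norm_num) (by exact_mod_cast hq) n
  have hP1 : (1:ℝ) ≤ (q:ℝ) ^ n := by linarith
  have hEP : E ≤ ((q:ℝ) ^ n) ^ (l - 2) := by
    have h1 : E ≤ (q:ℝ) ^ ((((l - 2) * n : ℕ) : ℝ)) := by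
      rw [hEdef]
      apply Real.rpow_le_rpow_of_exponent_le (by exact_mod_cast (by omega : 1 ≤ q))
      have hc : (((l - 2) * n : ℕ) : ℝ) = ((l:ℝ) - 2) * n := by
        push_cast [Nat.cast_sub (by omega : 2 ≤ l)]; ring
      rw [hc]
      nlinarith [Nat.cast_nonneg (α := ℝ) n]
    rwa [Real.rpow_natCast, mul_comm, pow_mul] at h1
  have h8Nl : 8 * (N:ℝ) ^ l ≤ (q:ℝ) ^ n := by
    have hNub : (N:ℝ) ≤ ((n:ℝ) + q) ^ q := by
      have := choose_upper n q (by omega)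
      calc (N:ℝ) ≤ (((n + q) ^ q : ℕ) : ℝ) := by exact_mod_cast this
        _ = ((n:ℝ) + q) ^ q := by push_cast; ring
    calc 8 * (N:ℝ) ^ l ≤ 8 * (((n:ℝ) + q) ^ q) ^ l := by
          have : (0:ℝ) ≤ (N:ℝ) := by linarith
          have := pow_le_pow_left₀ this hNub l
          linarith
      _ = 8 * ((n:ℝ) + q) ^ (q * l) := by rw [← pow_mul]
      _ ≤ (q:ℝ) ^ n := hpoly
  have hDR : (D:ℝ) = (T:ℝ) ^ (l - 1) := by rw [hDdef]; push_cast; ring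
  have hTlb : (q:ℝ) ^ n / N ≤ (T:ℝ) := by
    rw [div_le_iff₀ (by linarith : (0:ℝ) < (N:ℝ))]
    linarith [hNTR]
  have hDlbR : ((q:ℝ) ^ n / N) ^ (l - 1) ≤ (D:ℝ) := by
    rw [hDR]
    exact pow_le_pow_left₀ (by positivity) hTlb _
  have hE4 : (E + 4) * (4 * (N:ℝ)) ≤ (D:ℝ) := by
    set P := (q:ℝ) ^ n with hPdef
    have hNP : (0:ℝ) < (N:ℝ) := by linarith
    have hkey : 8 * P ^ (l - 2) * N ≤ P ^ (l - 1) / N ^ (l - 1) := by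
      rw [le_div_iff₀ (by positivity)]
      have hsplit : P ^ (l - 1) = P ^ (l - 2) * P := by
        rw [← pow_succ]; congr 1; omega
      have hNlsplit : (N:ℝ) * (N:ℝ) ^ (l - 1) = (N:ℝ) ^ l := by
        rw [← pow_succ']; congr 1; omega
      calc 8 * P ^ (l - 2) * N * N ^ (l - 1) = P ^ (l - 2) * (8 * ((N:ℝ) * N ^ (l-1))) := by ring
        _ = P ^ (l - 2) * (8 * (N:ℝ) ^ l) := by rw [hNlsplit]
        _ ≤ P ^ (l - 2) * P := by
            apply mul_le_mul_of_nonneg_left h8Nl (by positivity)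
        _ = P ^ (l - 1) := hsplit.symm
    have hdiv : P ^ (l-1) / (N:ℝ) ^ (l-1) = (P / N) ^ (l - 1) := (div_pow _ _ _).symm
    have hEP4 : (E + 4) * (4 * (N:ℝ)) ≤ 8 * P ^ (l - 2) * N := by
      have hP2 : (4:ℝ) ≤ P ^ (l - 2) := by
        calc (4:ℝ) ≤ P := hP4
          _ = P ^ 1 := (pow_one _).symm
          _ ≤ P ^ (l - 2) := pow_le_pow_right₀ hP1 (by omega)
      nlinarith [hEP, hE0, hNP]
    calc (E + 4) * (4 * (N:ℝ)) ≤ 8 * P ^ (l-2) * N := hEP4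
      _ ≤ P ^ (l-1) / N ^ (l-1) := hkey
      _ = (P / N) ^ (l-1) := hdiv
      _ ≤ (D:ℝ) := hDlbR
  -- s facts
  have hmod := Nat.div_add_mod (2 * D) N
  have hmodlt := Nat.mod_lt (2 * D) hNpos
  have hs1 : 2 * D < N * s := by
    rw [hsdef, Nat.mul_add, Nat.mul_one]
    calc 2 * D = N * (2 * D / N) + (2 * D) % N := (Nat.div_add_mod _ _).symm
      _ < N * (2 * D / N) + N := Nat.add_lt_add_left hmodlt _
  have hs2 : N * s ≤ 2 * D + N := by
    rw [hsdef, Nat.mul_add, Nat.mul_one]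
    have hh : N * (2 * D / N) ≤ 2 * D := by
      rw [Nat.mul_comm]; exact Nat.div_mul_le_self _ _
    omega
  -- M bound
  have hMexp : (M:ℝ) ≤ Real.exp (E + 1) := by
    have h2E : (2:ℝ) ^ E = Real.exp (Real.log 2 * E) := by
      rw [Real.rpow_def_of_pos (by norm_num : (0:ℝ) < 2)]
    have hMlt : (M:ℝ) < (2:ℝ) ^ E + 1 := Nat.ceil_lt_add_one (by positivity)
    have hle : Real.exp (Real.log 2 * E) ≤ Real.exp E := by
      apply Real.exp_le_exp.2
      nlinarith [Real.log_two_lt_d9, hE0]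
    have h1e : (1:ℝ) ≤ Real.exp E := Real.one_le_exp hE0
    have hee : Real.exp (E + 1) = Real.exp E * Real.exp 1 := by rw [← Real.exp_add]
    nlinarith [Real.exp_one_gt_d9, Real.exp_pos E]
  -- apply key_ineq
  have hmain := key_ineq N D M s E hE0 hN20 hE4 hs1 hs2 hMexp
  have hcardα : Fintype.card (Fin (l - 1) → {x // x ∈ Tst}) = D := by
    rw [hDdef, hTcard]
    simp [Fintype.card_fun, Fintype.card_coe]
  clear_value N Tst T D E M s
  -- real versions of s bounds
  have hsR1 : 2 * (D:ℝ) < (s:ℝ) * N := by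
    have : ((2 * D : ℕ) : ℝ) < ((N * s : ℕ) : ℝ) := by exact_mod_cast hs1
    push_cast at this; linarith
  have hsR2 : (s:ℝ) * N ≤ 2 * (D:ℝ) + N := by
    have : ((N * s : ℕ) : ℝ) ≤ ((2 * D + N : ℕ) : ℝ) := by exact_mod_cast hs2
    push_cast at this; linarith
  have hD0R : (0:ℝ) ≤ (D:ℝ) := Nat.cast_nonneg _
  have hs0R : (0:ℝ) < (s:ℝ) := by nlinarith
  have h20s : 20 * (s:ℝ) ≤ (s:ℝ) * N := by nlinarith
  have hratioD : (D:ℝ) ≤ 3 / 4 * (s:ℝ) * ((N:ℝ) - 1) := by nlinarith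
  have hDlbR2 : (320:ℝ) ≤ (D:ℝ) := by nlinarith [hE4, hE0, hNR]
  have hsDR : (s:ℝ) ≤ (D:ℝ) := by
    have hND : (N:ℝ) ≤ (D:ℝ)/16 := by nlinarith [hE4, hE0]
    nlinarith
  have hsD : s ≤ Fintype.card (Fin (l - 1) → {x // x ∈ Tst}) := by
    rw [hcardα]; exact_mod_cast hsDR
  -- ball bound and greedy
  have hcard2 : 2 ≤ Fintype.card (Fin N) := by rw [Fintype.card_fin]; omega
  have hratio : (Fintype.card (Fin (l - 1) → {x // x ∈ Tst}) : ℝ) ≤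
      3 / 4 * (s:ℝ) * ((Fintype.card (Fin N) : ℝ) - 1) := by
    rw [hcardα, Fintype.card_fin]; exact hratioD
  have hB : ∀ f : (Fin (l - 1) → {x // x ∈ Tst}) → Fin N,
      ((univ.filter fun g : (Fin (l - 1) → {x // x ∈ Tst}) → Fin N =>
          s ≤ agreeCard f g).card : ℝ) ≤
        4 * (((Fintype.card (Fin (l - 1) → {x // x ∈ Tst})).choose s : ℝ) *
          ((Fintype.card (Fin N) : ℝ) - 1) ^
            (Fintype.card (Fin (l - 1) → {x // x ∈ Tst}) - s)) :=
    fun f => ball_card_le f s hcard2 hratio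
  have hMB : (M:ℝ) * (4 * (((Fintype.card (Fin (l - 1) → {x // x ∈ Tst})).choose s : ℝ) *
      ((Fintype.card (Fin N) : ℝ) - 1) ^
        (Fintype.card (Fin (l - 1) → {x // x ∈ Tst}) - s))) <
      (Fintype.card ((Fin (l - 1) → {x // x ∈ Tst}) → Fin N) : ℝ) := by
    have hcf : Fintype.card ((Fin (l - 1) → {x // x ∈ Tst}) → Fin N) = N ^ D := by
      rw [Fintype.card_fun, hcardα, Fintype.card_fin]
    rw [hcardα, Fintype.card_fin, hcf]
    push_cast
    exact hmain
  haveI : Nonempty (Fin N) := ⟨⟨0, hNpos⟩⟩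
  obtain ⟨Φ, hΦ⟩ := exists_good_family s M hsD _ hB hMB
  refine ⟨Φ, ?_⟩
  intro i j hij
  have hlt : agreeCard (Φ j) (Φ i) < s := by
    rw [agreeCard_comm]; exact hΦ i j hij
  have hcard_le : agreeCard (Φ j) (Φ i) ≤ (2 * D) / N := by
    rw [hsdef] at hlt; omega
  have hgoal_eq : (univ.filter fun yb => Φ i yb = Φ j yb).card
      = agreeCard (Φ j) (Φ i) := rfl
  rw [hgoal_eq]
  have hcast : ((2 * D / N : ℕ) : ℝ) ≤ 2 * (D:ℝ) / N := by
    have := Nat.cast_div_le (α := ℝ) (m := 2 * D) (n := N)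
    push_cast at this
    convert this using 2
  calc (agreeCard (Φ j) (Φ i) : ℝ) ≤ ((2 * D / N : ℕ) : ℝ) := by exact_mod_cast hcard_le
    _ ≤ 2 * (D:ℝ) / N := hcast
    _ = 2 / (N:ℝ) * (T:ℝ) ^ (l - 1) := by rw [← hDR]; ring
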